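/- Let r > 2 and m = 1 − √(1 − 4/r²). For every ξ ∈ ℝⁿ with 4ξ₁² < |ξ|⁴ ≤ r²ξ₁² and every t ≥ 0, the function Ĝ(ξ,t) = (e^{λ₊t} − e^{λ₋t})/λ₀ with λ± = (−|ξ|² ± √(|ξ|⁴−4ξ₁²))/2, λ₀ = √(|ξ|⁴−4ξ₁²), satisfies 0 ≤ Ĝ(ξ,t) ≤ t·e^{−(m/2)|ξ|² t}. -/

import Mathlib

/-- for `r > 2`, `m = 1 - √(1 - 4/r²)`, and `ξ` with `4ξ₁² < |ξ|⁴ ≤ r²ξ₁²`,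
the explicit solution `Ĝ(ξ,t) = (e^{λ₊t} - e^{λ₋t})/λ₀` satisfies
`0 ≤ Ĝ(ξ,t) ≤ t·e^{-(m/2)|ξ|²t}` for `t ≥ 0`. -/
theorem stmt5 (n : ℕ) [NeZero n] (r : ℝ) (hr : 2 < r)
    (ξ : EuclideanSpace ℝ (Fin n))
    (hlow : 4 * (ξ 0) ^ 2 < ‖ξ‖ ^ 4) (hhigh : ‖ξ‖ ^ 4 ≤ r ^ 2 * (ξ 0) ^ 2) :
    ∀ m lam0 lamp lamm : ℝ, ∀ G : ℝ → ℝ,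
      m = 1 - Real.sqrt (1 - 4 / r ^ 2) →
      lam0 = Real.sqrt (‖ξ‖ ^ 4 - 4 * (ξ 0) ^ 2) →
      lamp = (-‖ξ‖ ^ 2 + lam0) / 2 →
      lamm = (-‖ξ‖ ^ 2 - lam0) / 2 →
      G = (fun t : ℝ => (Real.exp (lamp * t) - Real.exp (lamm * t)) / lam0) →
      ∀ t : ℝ, 0 ≤ t →
        0 ≤ G t ∧ G t ≤ t * Real.exp (-(m / 2) * ‖ξ‖ ^ 2 * t) := by
  intro m lam0 lamp lamm G hm hlam0 hp hmm hG t ht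
  have hr0 : (0 : ℝ) < r := by linarith
  set N := ‖ξ‖ ^ 2 with hN
  have hNnn : 0 ≤ N := sq_nonneg _
  have hX : (0 : ℝ) ≤ (ξ 0) ^ 2 := sq_nonneg _
  have hN4 : ‖ξ‖ ^ 4 = N ^ 2 := by rw [hN]; ring
  have hpos : 0 < ‖ξ‖ ^ 4 - 4 * (ξ 0) ^ 2 := by linarith
  have hl0pos : 0 < lam0 := by rw [hlam0]; exact Real.sqrt_pos.2 hpos
  set s := Real.sqrt (1 - 4 / r ^ 2) with hs
  have hs_nn : 0 ≤ s := Real.sqrt_nonneg _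
  have hr2pos : (0 : ℝ) < r ^ 2 := by positivity
  -- X ≥ N²/r²
  have hXlb : N ^ 2 / r ^ 2 ≤ (ξ 0) ^ 2 := by
    rw [div_le_iff₀ hr2pos]
    nlinarith [hhigh, hN4]
  -- λ₀ ≤ N·s
  have hkey : N ^ 2 * (1 - 4 / r ^ 2) = N ^ 2 - 4 * (N ^ 2 / r ^ 2) := by
    field_simp
  have hl0le : lam0 ≤ N * s := by
    have h1 : lam0 ≤ Real.sqrt (N ^ 2 * (1 - 4 / r ^ 2)) := by
      rw [hlam0, hN4]
      apply Real.sqrt_le_sqrt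
      rw [hkey]; linarith
    have h2 : Real.sqrt (N ^ 2 * (1 - 4 / r ^ 2)) = N * s := by
      rw [Real.sqrt_mul (sq_nonneg N), Real.sqrt_sq hNnn]
    linarith [h1, h2.le]
  -- λ₊ ≤ -(m/2)·N
  have hlamp : lamp ≤ -(m / 2) * N := by
    rw [hp, hm]
    have : -N + lam0 ≤ -N + N * s := by linarith
    nlinarith [this]
  -- a ≥ b
  have hab : lamm * t ≤ lamp * t := by
    have : lamm ≤ lamp := by rw [hp, hmm]; linarith
    exact mul_le_mul_of_nonneg_right this ht
  have hGt : G t = (Real.exp (lamp * t) - Real.exp (lamm * t)) / lam0 := by rw [hG]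
  constructor
  · rw [hGt]
    apply div_nonneg _ hl0pos.le
    have := Real.exp_le_exp.2 hab
    linarith
  · -- e^a - e^b ≤ (a-b)·e^a = λ₀ t e^a
    have hmain : Real.exp (lamp * t) - Real.exp (lamm * t) ≤ lam0 * t * Real.exp (lamp * t) := by
      have h1 := Real.add_one_le_exp (lamm * t - lamp * t)
      have h2 : Real.exp (lamm * t - lamp * t) * Real.exp (lamp * t) = Real.exp (lamm * t) := by
        rw [← Real.exp_add]; ring_nf
      have h3 : (lamm * t - lamp * t + 1) * Real.exp (lamp * t) ≤ Real.exp (lamm * t) := by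
        rw [← h2]
        exact mul_le_mul_of_nonneg_right h1 (Real.exp_pos _).le
      have h4 : lamp * t - lamm * t = lam0 * t := by rw [hp, hmm]; ring
      nlinarith [h3, Real.exp_pos (lamp * t)]
    have hstep1 : G t ≤ t * Real.exp (lamp * t) := by
      rw [hGt, div_le_iff₀ hl0pos]
      nlinarith [hmain]
    have hstep2 : Real.exp (lamp * t) ≤ Real.exp (-(m / 2) * N * t) := by
      apply Real.exp_le_exp.2
      exact mul_le_mul_of_nonneg_right hlamp ht
    calc G t ≤ t * Real.exp (lamp * t) := hstep1
      _ ≤ t * Real.exp (-(m / 2) * N * t) := by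
          exact mul_le_mul_of_nonneg_left hstep2 ht
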